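/- Let ‖r‖, ‖r̂‖, ‖r − r̂‖ be norms of vectors in a Hilbert space with ‖r − r̂‖ ≤ Cξ‖r̂‖ for some constant C > 0 and parameter ξ ∈ (0, 1/(2C)). If a subset J satisfies the Dörfler criterion ‖r̂|_J‖ ≥ θ‖r̂‖ for some θ ∈ (0,1], then ‖r|_J‖ ≥ θ̂‖r‖ for θ̂ := (θ(1 − Cξ/(1−Cξ)) − Cξ(1+θ))/(1 + Cξ/(1−Cξ)) whenever this quantity is positive; in particular, for ξ small enough (depending on θ and C), Dörfler marking for the perturbed residual r̂ implies Dörfler marking for the exact residual r with a parameter θ̂ > 0. -/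

import Mathlib

set_option maxHeartbeats 1000000

private lemma lp_norm_sqrt' {ι : Type*} (f : ι → ℝ) (hf : Memℓp f 2) :
    ‖(⟨f, hf⟩ : lp (fun _ : ι => ℝ) 2)‖ = Real.sqrt (∑' i, (f i) ^ 2) := by
  rw [lp.norm_eq_tsum_rpow (by norm_num) ⟨f, hf⟩, Real.sqrt_eq_rpow]
  norm_num

private lemma mink' {ι : Type*} (f g : ι → ℝ) (hf : Memℓp f 2) (hg : Memℓp g 2) :
    Real.sqrt (∑' i, (f i + g i) ^ 2)
      ≤ Real.sqrt (∑' i, (f i) ^ 2) + Real.sqrt (∑' i, (g i) ^ 2) := by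
  have h := norm_add_le (⟨f, hf⟩ : lp (fun _ : ι => ℝ) 2) ⟨g, hg⟩
  rw [lp_norm_sqrt' f hf, lp_norm_sqrt' g hg] at h
  have heq : ((⟨f, hf⟩ : lp (fun _ : ι => ℝ) 2) + ⟨g, hg⟩) = ⟨f + g, hf.add hg⟩ := rfl
  rw [heq, lp_norm_sqrt'] at h
  exact h

private lemma sumsq' {Λ : Type*} (r : Λ → ℝ) (hr : Memℓp r 2) :
    Summable fun i => (r i) ^ 2 := by
  have := hr.summable (p := 2) (by norm_num)
  simpa [sq_abs] using this

private lemma memsub' {Λ : Type*} (r : Λ → ℝ) (hr : Summable fun i => (r i) ^ 2)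
    (J : Set Λ) : Memℓp (fun i : J => r i) 2 := by
  apply memℓp_gen
  have : Summable fun i : J => (r (i : Λ)) ^ 2 := hr.subtype J
  simpa [sq_abs] using this

/-- The perturbed Dörfler parameter `θ̂` from STATEMENT 3. -/
noncomputable def doerflerThetaHat (C θ ξ : ℝ) : ℝ :=
  (θ * (1 - C * ξ / (1 - C * ξ)) - C * ξ * (1 + θ)) / (1 + C * ξ / (1 - C * ξ))

private lemma thetaHat_eq (C θ ξ : ℝ) (h : C * ξ < 1) :
    doerflerThetaHat C θ ξ
      = θ * (1 - 2 * (C * ξ)) - (C * ξ) * (1 + θ) * (1 - C * ξ) := by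
  have h1 : 1 - C * ξ ≠ 0 := by linarith
  have h2 : 1 + C * ξ / (1 - C * ξ) = 1 / (1 - C * ξ) := by field_simp; ring
  rw [doerflerThetaHat, h2]
  field_simp
  ring

/-- Dörfler marking for the perturbed residual `rh = r̂` implies Dörfler
marking for the exact residual `r` with parameter `θ̂`, which is positive for `ξ` small
enough. Norms are ℓ₂-norms over a countable index set, `r|_J` is restriction to `J`. -/
theorem stmt3 {Λ : Type*} [Countable Λ] (C θ : ℝ) (hC : 0 < C)
    (hθ0 : 0 < θ) (hθ1 : θ ≤ 1) :
    (∀ (ξ : ℝ) (r rh : Λ → ℝ) (J : Set Λ),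
      0 < ξ → ξ < 1 / (2 * C) →
      Memℓp r 2 → Memℓp rh 2 →
      Real.sqrt (∑' i, (r i - rh i) ^ 2) ≤ C * ξ * Real.sqrt (∑' i, (rh i) ^ 2) →
      θ * Real.sqrt (∑' i, (rh i) ^ 2) ≤ Real.sqrt (∑' i : J, (rh (i : Λ)) ^ 2) →
      0 < doerflerThetaHat C θ ξ →
      doerflerThetaHat C θ ξ * Real.sqrt (∑' i, (r i) ^ 2)
        ≤ Real.sqrt (∑' i : J, (r (i : Λ)) ^ 2)) ∧
    (∃ ξ₀ : ℝ, 0 < ξ₀ ∧ ∀ ξ : ℝ, 0 < ξ → ξ < ξ₀ → 0 < doerflerThetaHat C θ ξ) := by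
  constructor
  · intro ξ r rh J hξ0 hξ1 hr hrh herr hmark hhat
    set δ : ℝ := C * ξ with hδdef
    have hδ0 : 0 < δ := mul_pos hC hξ0
    have hδh : δ < 1 / 2 := by
      have h1 : C * ξ < C * (1 / (2 * C)) := mul_lt_mul_of_pos_left hξ1 hC
      have h2 : C * (1 / (2 * C)) = 1 / 2 := by field_simp
      rw [h2] at h1
      exact h1
    have hθhat : doerflerThetaHat C θ ξ
        = θ * (1 - 2 * δ) - δ * (1 + θ) * (1 - δ) := thetaHat_eq C θ ξ (by linarith)
    -- summability facts
    have haS : Summable fun i => (r i) ^ 2 := sumsq' r hr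
    have hbS : Summable fun i => (rh i) ^ 2 := sumsq' rh hrh
    have heS : Summable fun i => (r i - rh i) ^ 2 := sumsq' _ (hr.sub hrh)
    -- abbreviations
    set a := Real.sqrt (∑' i, (r i) ^ 2) with ha
    set b := Real.sqrt (∑' i, (rh i) ^ 2) with hb
    set e := Real.sqrt (∑' i, (r i - rh i) ^ 2) with he
    set aJ := Real.sqrt (∑' i : J, (r (i : Λ)) ^ 2) with haJ
    set bJ := Real.sqrt (∑' i : J, (rh (i : Λ)) ^ 2) with hbJ
    set eJ := Real.sqrt (∑' i : J, (r (i : Λ) - rh (i : Λ)) ^ 2) with heJ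
    have ha0 : 0 ≤ a := Real.sqrt_nonneg _
    have hb0 : 0 ≤ b := Real.sqrt_nonneg _
    have he0 : 0 ≤ e := Real.sqrt_nonneg _
    -- a ≤ b + e
    have habe : a ≤ b + e := by
      have := mink' rh (fun i => r i - rh i) hrh (hr.sub hrh)
      simpa [add_sub_cancel] using this
    -- bJ ≤ aJ + eJ
    have hfunf : (fun i => (rh i - r i) ^ 2) = fun i => (r i - rh i) ^ 2 := by
      funext i; ring
    have hdS : Summable fun i => (rh i - r i) ^ 2 := by rw [hfunf]; exact heS
    have hmemd : Memℓp (fun i : J => rh (i : Λ) - r (i : Λ)) 2 :=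
      memsub' (fun i => rh i - r i) hdS J
    have hbJe : bJ ≤ aJ + eJ := by
      have hmk := mink' (fun i : J => r (i : Λ)) (fun i : J => rh (i : Λ) - r (i : Λ))
        (memsub' r haS J) hmemd
      have h2 : ∀ i : J, (r (i:Λ) + (rh (i:Λ) - r (i:Λ))) ^ 2 = (rh (i:Λ)) ^ 2 := by
        intro i; ring
      have h3 : ∀ i : J, (rh (i:Λ) - r (i:Λ)) ^ 2 = (r (i:Λ) - rh (i:Λ)) ^ 2 := by
        intro i; ring
      rw [tsum_congr h2, tsum_congr h3] at hmk
      exact hmk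
    -- eJ ≤ e
    have heJe : eJ ≤ e :=
      Real.sqrt_le_sqrt (Summable.tsum_subtype_le (fun i => (r i - rh i) ^ 2) J
        (fun i => sq_nonneg _) heS)
    -- the key scalar inequality : θ̂ ≤ (θ - δ)/(1 + δ), i.e. θ̂ (1+δ) ≤ θ - δ
    rw [hθhat] at hhat ⊢
    have hθδ : δ < θ := by
      by_contra hcon
      push_neg at hcon
      nlinarith [mul_nonneg (by linarith : (0:ℝ) ≤ δ - θ) (by linarith : (0:ℝ) ≤ 1 - 2*δ),
        mul_pos hδ0 hθ0, mul_pos hδ0 hδ0]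
    have hkey : (θ * (1 - 2 * δ) - δ * (1 + θ) * (1 - δ)) * (1 + δ) ≤ θ - δ := by
      nlinarith [mul_nonneg hδ0.le hθ0.le,
        mul_nonneg (mul_nonneg hδ0.le hδ0.le) (by linarith : (0:ℝ) ≤ θ - δ),
        mul_nonneg (mul_nonneg (mul_nonneg hδ0.le hδ0.le) hθ0.le)
          (by linarith : (0:ℝ) ≤ 1 - δ)]
    -- chain
    nlinarith [mul_le_mul_of_nonneg_left habe hhat.le,
      mul_le_mul_of_nonneg_left herr hhat.le,
      mul_le_mul_of_nonneg_right hkey hb0,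
      hmark, hbJe, heJe, herr, hhat, hb0]
  · refine ⟨θ / (4 * C), by positivity, fun ξ hξ0 hξ1 => ?_⟩
    have hδ : C * ξ < θ / 4 := by
      have := mul_lt_mul_of_pos_left hξ1 hC
      calc C * ξ < C * (θ / (4 * C)) := this
        _ = θ / 4 := by field_simp
    have hδ0 : 0 < C * ξ := mul_pos hC hξ0
    have h1 : C * ξ < 1 := by linarith
    rw [thetaHat_eq C θ ξ h1]
    nlinarith [hδ, hδ0, hθ0, hθ1, mul_nonneg hδ0.le (by linarith : (0:ℝ) ≤ 1 - θ),
      mul_pos hδ0 hδ0, mul_nonneg (mul_pos hδ0 hδ0).le hθ0.le]
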